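/- Reduction of the four-component system to the dispersionless KP system: let u, v : ℝ³ → ℝ be continuously differentiable functions of (x, y, t), regarded as z-independent functions on ℝ⁴, and set w = 0 and q = (3/2)·u. Then the four equations (i) u_t − v·u_z − q·u_x + u·v_z + w·v_x − v_y = 0; (ii) 2u_z + w_x + 2w·w_z − q_z = 0; (iii) 2q_x − 3u_x − 2w_y + 2w·u_z − v_z − 2w·w_x + 2u·w_z = 0; (iv) w_t − q_y + 2v_x − 4w·u_x + w·q_x − q·w_x − v·w_z + u·q_z = 0 hold at every point if and only if 4v_x = 3u_y and 2u_t = 3u·u_x + 2v_y hold at every point. -/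

import Mathlib

/-- Partial derivative of a function on ℝ³ in the `i`-th coordinate.
Coordinates: `0 ↦ x`, `1 ↦ y`, `2 ↦ t`. -/
noncomputable def pd3 (i : Fin 3) (h : (Fin 3 → ℝ) → ℝ) (q : Fin 3 → ℝ) : ℝ :=
  fderiv ℝ h q (Pi.single i 1)

/-- Partial derivative of a function on ℝ⁴ in the `i`-th coordinate.
Coordinates: `0 ↦ x`, `1 ↦ y`, `2 ↦ z`, `3 ↦ t`. -/
noncomputable def pd4 (i : Fin 4) (h : (Fin 4 → ℝ) → ℝ) (w : Fin 4 → ℝ) : ℝ :=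
  fderiv ℝ h w (Pi.single i 1)

noncomputable def L4 : (Fin 4 → ℝ) →L[ℝ] (Fin 3 → ℝ) :=
  ContinuousLinearMap.pi
    ![ContinuousLinearMap.proj 0, ContinuousLinearMap.proj 1, ContinuousLinearMap.proj 3]

lemma L4_apply (s : Fin 4 → ℝ) : L4 s = ![s 0, s 1, s 3] := by
  funext i
  fin_cases i <;> rfl

lemma pd4_comp (u : (Fin 3 → ℝ) → ℝ) (hu : ContDiff ℝ 1 u) (i : Fin 4) (s : Fin 4 → ℝ) :
    pd4 i (fun s => u (L4 s)) s = fderiv ℝ u (L4 s) (L4 (Pi.single i 1)) := by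
  unfold pd4
  have h : fderiv ℝ (fun s => u (L4 s)) s =
      (fderiv ℝ u (L4 s)).comp (L4 : (Fin 4 → ℝ) →L[ℝ] (Fin 3 → ℝ)) := by
    have := fderiv_comp (x := s) ((hu.differentiable one_ne_zero).differentiableAt (x := L4 s))
      L4.differentiableAt
    simpa [L4.fderiv, Function.comp_def] using this
  rw [h]; rfl

lemma L4_single0 : L4 (Pi.single (0 : Fin 4) 1) = Pi.single (0 : Fin 3) 1 := by
  rw [L4_apply]; funext i; fin_cases i <;> simp
lemma L4_single1 : L4 (Pi.single (1 : Fin 4) 1) = Pi.single (1 : Fin 3) 1 := by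
  rw [L4_apply]; funext i; fin_cases i <;> simp
lemma L4_single2 : L4 (Pi.single (2 : Fin 4) 1) = 0 := by
  rw [L4_apply]; funext i; fin_cases i <;> simp
lemma L4_single3 : L4 (Pi.single (3 : Fin 4) 1) = Pi.single (2 : Fin 3) 1 := by
  rw [L4_apply]; funext i; fin_cases i <;> simp

theorem reduction_to_dkp_system (u v : (Fin 3 → ℝ) → ℝ)
    (hu : ContDiff ℝ 1 u) (hv : ContDiff ℝ 1 v)
    (U V W Q : (Fin 4 → ℝ) → ℝ)
    (hU : U = fun s => u ![s 0, s 1, s 3])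
    (hV : V = fun s => v ![s 0, s 1, s 3])
    (hW : W = fun _ => 0)
    (hQ : Q = fun s => (3 / 2 : ℝ) * U s) :
    (∀ s : Fin 4 → ℝ,
      (pd4 3 U s - V s * pd4 2 U s - Q s * pd4 0 U s
          + U s * pd4 2 V s + W s * pd4 0 V s - pd4 1 V s = 0) ∧
      (2 * pd4 2 U s + pd4 0 W s + 2 * W s * pd4 2 W s - pd4 2 Q s = 0) ∧
      (2 * pd4 0 Q s - 3 * pd4 0 U s - 2 * pd4 1 W s + 2 * W s * pd4 2 U s
          - pd4 2 V s - 2 * W s * pd4 0 W s + 2 * U s * pd4 2 W s = 0) ∧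
      (pd4 3 W s - pd4 1 Q s + 2 * pd4 0 V s - 4 * W s * pd4 0 U s
          + W s * pd4 0 Q s - Q s * pd4 0 W s - V s * pd4 2 W s + U s * pd4 2 Q s = 0)) ↔
    (∀ q : Fin 3 → ℝ,
      4 * pd3 0 v q = 3 * pd3 1 u q ∧
      2 * pd3 2 u q = 3 * u q * pd3 0 u q + 2 * pd3 1 v q) := by
  have hUc : U = fun s => u (L4 s) := by
    rw [hU]; funext s; rw [L4_apply]
  have hVc : V = fun s => v (L4 s) := by
    rw [hV]; funext s; rw [L4_apply]
  -- derivatives of W and Q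
  have hWd : ∀ i s, pd4 i W s = 0 := by
    intro i s; rw [hW]; simp [pd4]
  have hUdiff : Differentiable ℝ U := by
    rw [hUc]
    exact ((hu.differentiable one_ne_zero).comp L4.differentiable)
  have hQd : ∀ i s, pd4 i Q s = (3/2 : ℝ) * pd4 i U s := by
    intro i s
    rw [hQ]
    unfold pd4
    rw [fderiv_const_mul (hUdiff s)]
    rfl
  have hU0 : ∀ s, pd4 0 U s = pd3 0 u (L4 s) := by
    intro s; rw [hUc, pd4_comp u hu, L4_single0]; rfl
  have hU1 : ∀ s, pd4 1 U s = pd3 1 u (L4 s) := by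
    intro s; rw [hUc, pd4_comp u hu, L4_single1]; rfl
  have hU2 : ∀ s, pd4 2 U s = 0 := by
    intro s; rw [hUc, pd4_comp u hu, L4_single2]; simp
  have hU3 : ∀ s, pd4 3 U s = pd3 2 u (L4 s) := by
    intro s; rw [hUc, pd4_comp u hu, L4_single3]; rfl
  have hV0 : ∀ s, pd4 0 V s = pd3 0 v (L4 s) := by
    intro s; rw [hVc, pd4_comp v hv, L4_single0]; rfl
  have hV1 : ∀ s, pd4 1 V s = pd3 1 v (L4 s) := by
    intro s; rw [hVc, pd4_comp v hv, L4_single1]; rfl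
  have hV2 : ∀ s, pd4 2 V s = 0 := by
    intro s; rw [hVc, pd4_comp v hv, L4_single2]; simp
  have hUval : ∀ s, U s = u (L4 s) := fun s => by rw [hUc]
  have hVval : ∀ s, V s = v (L4 s) := fun s => by rw [hVc]
  have hQval : ∀ s, Q s = (3/2 : ℝ) * U s := fun s => by rw [hQ]
  have hWval : ∀ s, W s = 0 := fun s => by rw [hW]
  have hsimp := fun s => (⟨hU0 s, hU1 s, hU2 s, hU3 s, hV0 s, hV1 s, hV2 s⟩ :
    _ ∧ _ ∧ _ ∧ _ ∧ _ ∧ _ ∧ _)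
  constructor
  · intro h q
    set s : Fin 4 → ℝ := ![q 0, q 1, 0, q 2] with hs
    have hLs : L4 s = q := by
      rw [L4_apply]; funext i; fin_cases i <;> rfl
    obtain ⟨h1, h2, h3, h4⟩ := h s
    simp only [hU0, hU1, hU2, hU3, hV0, hV1, hV2, hWd, hQd, hQval, hUval, hVval, hWval,
      hLs] at h1 h4
    constructor
    · linarith
    · linarith
  · intro h s
    obtain ⟨h1, h2⟩ := h (L4 s)
    simp only [hU0, hU1, hU2, hU3, hV0, hV1, hV2, hWd, hQd, hQval, hUval, hVval, hWval]
    refine ⟨by linarith, by ring, by ring, by linarith⟩
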